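/- Let α ≥ 0, σ > 0 and λ̄ ∈ ℝ, and set γ = √(α² + 2σ²), c₁ = arctanh(−α/γ), c₂ = α/σ², d₁ = γ/σ², d₂ = −α·λ̄. Define B(t) = (1/σ²)·(α + γ·tanh(−(1/2)γt + c₁)) and A(t) = −c₂·d₂·t + (2·d₁·d₂/γ)·log( cosh(−(1/2)γt + c₁) / cosh(c₁) ). Then A(0) = 0 and A is differentiable with A'(t) = α·λ̄·B(t) for every t ≥ 0. -/

import Mathlib

/-- ODE for the exponent `A` in the closed-form large-pool loss (no-feedback case):
`A(0) = 0` and `A'(t) = α λ̄ B(t)`.  Here `c₁ = arctanh(−α/γ)` is written via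
`arctanh y = (1/2) log((1+y)/(1−y))`. -/
theorem ode_A (α σ lamBar : ℝ) (hα : 0 ≤ α) (hσ : 0 < σ)
    (γ c₁ c₂ d₁ d₂ : ℝ)
    (hγ : γ = Real.sqrt (α ^ 2 + 2 * σ ^ 2))
    (hc₁ : c₁ = (1 / 2) * Real.log ((1 + -α / γ) / (1 - -α / γ)))
    (hc₂ : c₂ = α / σ ^ 2) (hd₁ : d₁ = γ / σ ^ 2) (hd₂ : d₂ = -α * lamBar)
    (B A : ℝ → ℝ)
    (hB : ∀ t : ℝ, B t = (1 / σ ^ 2) * (α + γ * Real.tanh (-(1 / 2) * γ * t + c₁)))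
    (hA : ∀ t : ℝ, A t = -c₂ * d₂ * t +
      (2 * d₁ * d₂ / γ) * Real.log (Real.cosh (-(1 / 2) * γ * t + c₁) / Real.cosh c₁)) :
    A 0 = 0 ∧ ∀ t : ℝ, 0 ≤ t → HasDerivAt A (α * lamBar * B t) t := by
  have hγpos : 0 < γ := by
    rw [hγ]
    apply Real.sqrt_pos.mpr
    positivity
  have hA' : ∀ t : ℝ, A t = -c₂ * d₂ * t +
      (2 * d₁ * d₂ / γ) * (Real.log (Real.cosh (-(1 / 2) * γ * t + c₁)) -
        Real.log (Real.cosh c₁)) := by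
    intro t
    rw [hA t, Real.log_div (Real.cosh_pos _).ne' (Real.cosh_pos _).ne']
  constructor
  · rw [hA' 0]; simp
  · intro t _
    have hu : HasDerivAt (fun t : ℝ => -(1 / 2) * γ * t + c₁) (-(1 / 2) * γ) t := by
      simpa using ((hasDerivAt_id t).const_mul (-(1 / 2) * γ)).add_const c₁
    have hcosh : HasDerivAt (fun t : ℝ => Real.cosh (-(1 / 2) * γ * t + c₁))
        (Real.sinh (-(1 / 2) * γ * t + c₁) * (-(1 / 2) * γ)) t :=
      (Real.hasDerivAt_cosh _).comp t hu
    have hlog := hcosh.log (Real.cosh_pos _).ne'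
    have hlin : HasDerivAt (fun t : ℝ => -c₂ * d₂ * t) (-c₂ * d₂) t := by
      simpa using (hasDerivAt_id t).const_mul (-c₂ * d₂)
    have hfull := hlin.add (((hlog.sub_const (Real.log (Real.cosh c₁))).const_mul
      (2 * d₁ * d₂ / γ)))
    have heq : -c₂ * d₂ + 2 * d₁ * d₂ / γ *
        (Real.sinh (-(1 / 2) * γ * t + c₁) * (-(1 / 2) * γ) /
          Real.cosh (-(1 / 2) * γ * t + c₁)) = α * lamBar * B t := by
      rw [hB t, Real.tanh_eq_sinh_div_cosh, hc₂, hd₁, hd₂]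
      have hc := (Real.cosh_pos (-(1 / 2) * γ * t + c₁)).ne'
      field_simp
    have : A = fun t => -c₂ * d₂ * t + (2 * d₁ * d₂ / γ) *
        (Real.log (Real.cosh (-(1 / 2) * γ * t + c₁)) - Real.log (Real.cosh c₁)) :=
      funext hA'
    rw [this]
    exact heq ▸ hfull
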